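/- Let n ≥ 1, let a, b ∈ ℝ, and let P be an n×n real positive definite matrix. Then the function f₁(Q) = a · log(det Q) + b · trace(Q⁻¹), defined on n×n real matrices, is Fréchet differentiable at P with derivative V ↦ a · trace(P⁻¹ * V) − b · trace(P⁻¹ * V * P⁻¹); equivalently, its Euclidean (Frobenius) gradient at P is a · P⁻¹ − b · P⁻² = a P⁻¹ − b P⁻¹ P⁻¹. -/

import Mathlib

open Matrix

attribute [local instance] Matrix.frobeniusSeminormedAddCommGroup
  Matrix.frobeniusNormedAddCommGroup Matrix.frobeniusNormedSpace

attribute [local instance] Matrix.frobeniusNormedRing Matrix.frobeniusNormedAlgebra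

/-- The determinant as a continuous multilinear map in the rows. -/
noncomputable def detCML (n : ℕ) :
    ContinuousMultilinearMap ℝ (fun _ : Fin n => (Fin n → ℝ)) ℝ :=
  MultilinearMap.mkContinuous
    ((Matrix.detRowAlternating : ((Fin n) → ℝ) [⋀^Fin n]→ₗ[ℝ] ℝ)).toMultilinearMap
    (n.factorial) (by
      intro m
      show ‖Matrix.det (Matrix.of m)‖ ≤ _
      rw [Matrix.det_apply]
      refine (norm_sum_le _ _).trans ?_
      have h : ∀ σ : Equiv.Perm (Fin n),
          ‖Equiv.Perm.sign σ • ∏ i, Matrix.of m (σ i) i‖ ≤ ∏ i, ‖m i‖ := by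
        intro σ
        have h1 : ‖Equiv.Perm.sign σ • ∏ i, Matrix.of m (σ i) i‖
            = ∏ i, ‖m (σ i) i‖ := by
          rcases Int.units_eq_one_or (Equiv.Perm.sign σ) with h | h <;>
            simp [h, Units.smul_def, Real.norm_eq_abs, Finset.abs_prod]
        rw [h1]
        calc (∏ i, ‖m (σ i) i‖)
            ≤ ∏ i, ‖m (σ i)‖ :=
            Finset.prod_le_prod (fun _ _ => norm_nonneg _)
              (fun i _ => norm_le_pi_norm (m (σ i)) i)
          _ = ∏ i, ‖m i‖ := Equiv.prod_comp σ (fun i => ‖m i‖)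
      calc (∑ σ : Equiv.Perm (Fin n), ‖Equiv.Perm.sign σ • ∏ i, Matrix.of m (σ i) i‖)
          ≤ ∑ _σ : Equiv.Perm (Fin n), ∏ i, ‖m i‖ :=
            Finset.sum_le_sum (fun σ _ => h σ)
        _ = (n.factorial : ℝ) * ∏ i, ‖m i‖ := by
            rw [Finset.sum_const, Finset.card_univ, Fintype.card_perm, Fintype.card_fin,
              nsmul_eq_mul])

lemma detCML_apply {n : ℕ} (M : Matrix (Fin n) (Fin n) ℝ) :
    detCML n (fun i => M i) = M.det := rfl

lemma det_updateRow_one {n : ℕ} (i : Fin n) (v : Fin n → ℝ) :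
    (Matrix.updateRow (1 : Matrix (Fin n) (Fin n) ℝ) i v).det = v i := by
  have h := Matrix.cramer_transpose_apply (1 : Matrix (Fin n) (Fin n) ℝ) v i
  rw [Matrix.transpose_one, Matrix.cramer_one] at h
  simpa using h.symm

theorem f1_fderiv {n : ℕ} (hn : 1 ≤ n) (a b : ℝ)
    (P : Matrix (Fin n) (Fin n) ℝ) (hP : P.PosDef) :
    ∃ L : Matrix (Fin n) (Fin n) ℝ →L[ℝ] ℝ,
      HasFDerivAt
        (fun Q : Matrix (Fin n) (Fin n) ℝ => a * Real.log Q.det + b * (Q⁻¹).trace)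
        L P ∧
      (∀ V : Matrix (Fin n) (Fin n) ℝ,
        L V = a * (P⁻¹ * V).trace - b * (P⁻¹ * V * P⁻¹).trace) ∧
      (∀ V : Matrix (Fin n) (Fin n) ℝ,
        L V = ((a • P⁻¹ - b • (P⁻¹ * P⁻¹))ᵀ * V).trace) := by
  classical
  have hdet_ne : P.det ≠ 0 := ne_of_gt hP.det_pos
  -- rows as a continuous linear map
  let rowsCLM : Matrix (Fin n) (Fin n) ℝ →L[ℝ] (Fin n → Fin n → ℝ) :=
    LinearMap.toContinuousLinearMap
      { toFun := fun M => fun i => M i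
        map_add' := fun _ _ => rfl
        map_smul' := fun _ _ => rfl }
  -- left multiplication by P⁻¹
  let mulCLM : Matrix (Fin n) (Fin n) ℝ →L[ℝ] Matrix (Fin n) (Fin n) ℝ :=
    ContinuousLinearMap.mul ℝ (Matrix (Fin n) (Fin n) ℝ) P⁻¹
  -- trace as a continuous linear map
  let traceCLM : Matrix (Fin n) (Fin n) ℝ →L[ℝ] ℝ :=
    LinearMap.toContinuousLinearMap (Matrix.traceLinearMap (Fin n) ℝ ℝ)
  let x₀ : Fin n → Fin n → ℝ := fun i => (1 : Matrix (Fin n) (Fin n) ℝ) i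
  have hx₀ : rowsCLM (mulCLM P) = x₀ := by
    have h : P⁻¹ * P = 1 := Matrix.nonsing_inv_mul P (isUnit_iff_ne_zero.mpr hdet_ne)
    show (fun i => (P⁻¹ * P) i) = x₀
    rw [h]
  let D : Matrix (Fin n) (Fin n) ℝ →L[ℝ] ℝ :=
    ((detCML n).linearDeriv x₀).comp (rowsCLM.comp mulCLM)
  have hg : HasFDerivAt (fun Q : Matrix (Fin n) (Fin n) ℝ => (P⁻¹ * Q).det) D P := by
    have h1 := (rowsCLM.comp mulCLM).hasFDerivAt (x := P)
    have h2 := ((detCML n).hasFDerivAt (x := rowsCLM (mulCLM P))).comp P h1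
    rw [hx₀] at h2
    exact h2
  have hDV : ∀ V : Matrix (Fin n) (Fin n) ℝ, D V = (P⁻¹ * V).trace := by
    intro V
    show (detCML n).linearDeriv x₀ (fun i => (P⁻¹ * V) i) = _
    rw [ContinuousMultilinearMap.linearDeriv_apply]
    have h : ∀ i : Fin n,
        detCML n (Function.update x₀ i ((P⁻¹ * V) i)) = (P⁻¹ * V) i i := by
      intro i
      have he : Function.update x₀ i ((P⁻¹ * V) i)
          = fun j => (Matrix.updateRow (1 : Matrix (Fin n) (Fin n) ℝ) i ((P⁻¹ * V) i)) j := by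
        funext j
        by_cases hj : j = i
        · subst hj; simp [x₀]
        · simp [Function.update_of_ne hj, Matrix.updateRow_ne hj, x₀]
      rw [he, detCML_apply, det_updateRow_one]
    simp only [h]
    rfl
  -- derivative of det at P
  have hdet : HasFDerivAt (fun Q : Matrix (Fin n) (Fin n) ℝ => Q.det) (P.det • D) P := by
    have h1 := hg.const_mul P.det
    exact h1.congr_of_eventuallyEq (Filter.Eventually.of_forall fun Q => by
      show Q.det = P.det * (P⁻¹ * Q).det
      rw [Matrix.det_mul, Matrix.det_nonsing_inv, Ring.inverse_eq_inv]
      field_simp)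
  -- derivative of a * log det at P
  have hlog : HasFDerivAt (fun Q : Matrix (Fin n) (Fin n) ℝ => a * Real.log Q.det)
      (a • ((P.det)⁻¹ • (P.det • D))) P :=
    ((Real.hasDerivAt_log hdet_ne).comp_hasFDerivAt P hdet).const_mul a
  -- derivative of inverse at P
  have hU : IsUnit P := (Matrix.isUnit_iff_isUnit_det P).mpr (isUnit_iff_ne_zero.mpr hdet_ne)
  have hUc : (hU.unit : Matrix (Fin n) (Fin n) ℝ) = P := hU.unit_spec
  have hUinv : ((hU.unit⁻¹ : (Matrix (Fin n) (Fin n) ℝ)ˣ) : Matrix (Fin n) (Fin n) ℝ)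
      = P⁻¹ := by
    rw [← Ring.inverse_unit hU.unit, hUc, Matrix.nonsing_inv_eq_ringInverse]
  have hinv : HasFDerivAt (fun Q : Matrix (Fin n) (Fin n) ℝ => Q⁻¹)
      (-(ContinuousLinearMap.mulLeftRight ℝ (Matrix (Fin n) (Fin n) ℝ) P⁻¹ P⁻¹)) P := by
    have h1 := hasFDerivAt_ringInverse (𝕜 := ℝ) hU.unit
    rw [hUc, hUinv] at h1
    exact h1.congr_of_eventuallyEq (Filter.Eventually.of_forall fun Q =>
      (Matrix.nonsing_inv_eq_ringInverse Q))
  -- derivative of b * trace inverse at P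
  have htr : HasFDerivAt (fun Q : Matrix (Fin n) (Fin n) ℝ => b * (Q⁻¹).trace)
      (b • (traceCLM.comp
        (-(ContinuousLinearMap.mulLeftRight ℝ (Matrix (Fin n) (Fin n) ℝ) P⁻¹ P⁻¹)))) P :=
    (traceCLM.hasFDerivAt.comp P hinv).const_mul b
  have key : ∀ V : Matrix (Fin n) (Fin n) ℝ,
      (@HAdd.hAdd (Matrix (Fin n) (Fin n) ℝ →L[ℝ] ℝ) (Matrix (Fin n) (Fin n) ℝ →L[ℝ] ℝ)
        (Matrix (Fin n) (Fin n) ℝ →L[ℝ] ℝ) _ (a • ((P.det)⁻¹ • (P.det • D))) (b • (traceCLM.comp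
        (-(ContinuousLinearMap.mulLeftRight ℝ (Matrix (Fin n) (Fin n) ℝ) P⁻¹ P⁻¹))))) V
      = a * (P⁻¹ * V).trace - b * (P⁻¹ * V * P⁻¹).trace := by
    intro V
    have h2 : traceCLM (-(P⁻¹ * V * P⁻¹)) = -(P⁻¹ * V * P⁻¹).trace := by
      simp [traceCLM]
    show a * ((P.det)⁻¹ * (P.det * D V)) + b * traceCLM (-(P⁻¹ * V * P⁻¹)) = _
    rw [hDV, h2]
    field_simp
    ring
  refine ⟨_, hlog.add htr, fun V => key V, fun V => ?_⟩
  refine (key V).trans ?_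
  have hPt : Pᵀ = P := by
    have h := hP.1
    rwa [Matrix.IsHermitian, Matrix.conjTranspose_eq_transpose_of_trivial] at h
  have hPinvT : (P⁻¹)ᵀ = P⁻¹ := by
    rw [Matrix.transpose_nonsing_inv, hPt]
  rw [Matrix.transpose_sub, Matrix.transpose_smul, Matrix.transpose_smul,
    Matrix.transpose_mul, hPinvT, Matrix.sub_mul, Matrix.smul_mul, Matrix.smul_mul,
    Matrix.trace_sub, Matrix.trace_smul, Matrix.trace_smul, smul_eq_mul, smul_eq_mul,
    Matrix.trace_mul_cycle P⁻¹ V P⁻¹]
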